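/- Let x_1, ..., x_n (n ≥ 3) be a non-metric cycle in an ℝ>0-edge-labelled graph G with long edge {x_1, x_n}, and suppose G contains a chord, i.e., an edge {x_i, x_j} between two vertices of the cycle not joined by an edge of the cycle. Then at least one of the two cycles into which the chord splits the original cycle is non-metric. -/

import Mathlib

/-- An `ℝ>0`-edge-labelled graph: an irreflexive symmetric adjacency relation on the
vertex set together with a symmetric assignment of a positive real label to each edge. -/
structure ELGraph (V : Type*) where
  Adj : V → V → Prop
  label : V → V → ℝ
  adj_symm : ∀ x y, Adj x y → Adj y x
  adj_irrefl : ∀ x, ¬ Adj x x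
  label_symm : ∀ x y, label x y = label y x
  label_pos : ∀ x y, Adj x y → 0 < label x y


/-- The cyclic successor of an index in `Fin n`. -/
def Fin.cycSucc {n : ℕ} (i : Fin n) : Fin n := ⟨(i.1 + 1) % n, Nat.mod_lt _ i.pos⟩

namespace ELGraph

variable {V : Type*}

/-- A walk: a nonempty list of vertices with consecutive vertices joined by edges. -/
def IsWalk (G : ELGraph V) (l : List V) : Prop :=
  l ≠ [] ∧ l.Chain' G.Adj

/-- The length of a walk: the sum of the labels of its (consecutive) edges. -/
def walkLen (G : ELGraph V) (l : List V) : ℝ :=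
  ((l.zip l.tail).map fun p => G.label p.1 p.2).sum

/-- A walk connecting `x` and `y`. -/
def IsWalkBetween (G : ELGraph V) (x y : V) (l : List V) : Prop :=
  G.IsWalk l ∧ l.head? = some x ∧ l.getLast? = some y

/-- A path connecting `x` and `y`: a walk with no repeated vertices. -/
def IsPathBetween (G : ELGraph V) (x y : V) (l : List V) : Prop :=
  G.IsWalkBetween x y l ∧ l.Nodup

/-- `G` is connected: any two vertices are joined by a path. -/
def Connected (G : ELGraph V) : Prop :=
  ∀ x y, ∃ l, G.IsPathBetween x y l

/-- `d` is the shortest-path distance of `G`: `d x x = 0`, and for distinct `x, y`,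
`d x y` is the minimum length of a path connecting `x` and `y`. -/
def IsShortestDist (G : ELGraph V) (d : V → V → ℝ) : Prop :=
  (∀ x, d x x = 0) ∧
  ∀ x y, x ≠ y →
    (∃ l, G.IsPathBetween x y l ∧ G.walkLen l = d x y) ∧
    ∀ l, G.IsPathBetween x y l → d x y ≤ G.walkLen l

/-- A cycle on `n ≥ 3` vertices, given as an injective map `Fin n → V` with consecutive
vertices (cyclically, including the wrap-around pair) joined by edges. -/
def IsCycle (G : ELGraph V) {n : ℕ} (c : Fin n → V) : Prop :=
  3 ≤ n ∧ Function.Injective c ∧ ∀ i, G.Adj (c i) (c i.cycSucc)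

/-- The total length of the `n` edges of a cycle. -/
noncomputable def cycleLen (G : ELGraph V) {n : ℕ} (c : Fin n → V) : ℝ :=
  ∑ i, G.label (c i) (c i.cycSucc)

/-- The edge of the cycle at position `i₀` is a long edge: its label is strictly greater
than the sum of the labels of all the remaining edges of the cycle. -/
def IsLongEdge (G : ELGraph V) {n : ℕ} (c : Fin n → V) (i₀ : Fin n) : Prop :=
  G.cycleLen c - G.label (c i₀) (c i₀.cycSucc) < G.label (c i₀) (c i₀.cycSucc)

/-- A non-metric cycle: a cycle having a long edge. -/
def IsNonMetricCycle (G : ELGraph V) {n : ℕ} (c : Fin n → V) : Prop :=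
  G.IsCycle c ∧ ∃ i₀, G.IsLongEdge c i₀

/-- An induced cycle: the only edges of `G` among its vertices are the cycle edges. -/
def IsInducedCycle (G : ELGraph V) {n : ℕ} (c : Fin n → V) : Prop :=
  G.IsCycle c ∧ ∀ i j, G.Adj (c i) (c j) → j = i.cycSucc ∨ i = j.cycSucc

/-- An embedding of `A` into `B` as an induced subgraph: an injective map on vertices
such that two vertices are joined by an edge of label `ℓ` iff their images are. -/
def IsEmbedding {W : Type*} (A : ELGraph V) (B : ELGraph W) (e : V → W) : Prop :=
  Function.Injective e ∧
  ∀ x y, (A.Adj x y ↔ B.Adj (e x) (e y)) ∧ (A.Adj x y → B.label (e x) (e y) = A.label x y)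

/-- An automorphism of `B`: a permutation of the vertices preserving edges, non-edges
and labels. -/
def IsAuto {W : Type*} (B : ELGraph W) (Φ : Equiv.Perm W) : Prop :=
  ∀ x y, (B.Adj x y ↔ B.Adj (Φ x) (Φ y)) ∧ (B.Adj x y → B.label (Φ x) (Φ y) = B.label x y)

/-- A partial automorphism of `A` with domain `S`: an injective map preserving edges,
non-edges and labels. -/
def IsPartialAuto (A : ELGraph V) (S : Set V) (φ : S → V) : Prop :=
  Function.Injective φ ∧
  ∀ x y : S, (A.Adj x y ↔ A.Adj (φ x) (φ y)) ∧ (A.Adj x y → A.label (φ x) (φ y) = A.label x y)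

end ELGraph

/-- Let `c : Fin n → V` (`n ≥ 3`) be a non-metric cycle in an `ℝ>0`-edge-labelled graph
`G` whose long edge is the wrap-around edge `{x₁, xₙ}` (the edge from index `n - 1` to
index `0`), and suppose `G` contains a chord, i.e. an edge `{c i, c j}` between two
vertices of the cycle not joined by a cycle edge. Then at least one of the two cycles
into which the chord splits the original cycle (the arc from `i` to `j` closed by the
chord, and the arc from `j` around through `xₙ, x₁` to `i` closed by the chord) is
non-metric. -/
lemma my_mod_helper {n a : ℕ} (h : a < 2 * n) :
    a % n = if a < n then a else a - n := by
  split
  · exact Nat.mod_eq_of_lt ‹_›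
  · rw [Nat.mod_eq_sub_mod (by omega), Nat.mod_eq_of_lt (by omega)]

theorem chord_splits_nonmetric_cycle {V : Type*} [Fintype V] (G : ELGraph V)
    {n : ℕ} (hn : 3 ≤ n) (c : Fin n → V) (hcyc : G.IsCycle c)
    (hlong : G.IsLongEdge c ⟨n - 1, by omega⟩)
    (i j : Fin n) (hij : (i : ℕ) < (j : ℕ))
    (hchord : G.Adj (c i) (c j))
    (hnot₁ : j ≠ i.cycSucc) (hnot₂ : i ≠ j.cycSucc) :
    G.IsNonMetricCycle
        (fun k : Fin ((j : ℕ) - (i : ℕ) + 1) =>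
          c ⟨(i : ℕ) + (k : ℕ), by have := k.isLt; have := j.isLt; omega⟩) ∨
      G.IsNonMetricCycle
        (fun k : Fin (n - ((j : ℕ) - (i : ℕ)) + 1) =>
          c ⟨((j : ℕ) + (k : ℕ)) % n, Nat.mod_lt _ (by omega)⟩) := by
  obtain ⟨-, hinj, hadj⟩ := hcyc
  have hi := i.isLt
  have hj := j.isLt
  have hnpos : 0 < n := by omega
  have hm2 : i.1 + 2 ≤ j.1 := by
    by_contra h
    apply hnot₁
    apply Fin.ext
    show j.1 = (i.1 + 1) % n
    rw [Nat.mod_eq_of_lt (by omega)]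
    omega
  have hmn : j.1 - i.1 ≤ n - 2 := by
    by_contra h
    apply hnot₂
    apply Fin.ext
    show i.1 = (j.1 + 1) % n
    have h1 : i.1 = 0 := by omega
    have h2 : j.1 + 1 = n := by omega
    rw [h1, h2, Nat.mod_self]
  set F : ℕ → ℝ := fun t => if h : t < n then G.label (c ⟨t, h⟩) (c (Fin.cycSucc ⟨t, h⟩)) else 0
    with hF
  have hFval : ∀ t (h : t < n),
      F t = G.label (c ⟨t, h⟩) (c ⟨(t + 1) % n, Nat.mod_lt _ hnpos⟩) := by
    intro t h
    rw [hF]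
    simp only
    rw [dif_pos h]
    rfl
  have hT : G.cycleLen c = ∑ t ∈ Finset.range n, F t := by
    rw [ELGraph.cycleLen, ← Fin.sum_univ_eq_sum_range F n]
    refine Finset.sum_congr rfl fun k _ => ?_
    rw [hFval k.1 k.isLt]
    rfl
  have hFn1 : F (n - 1) = G.label (c ⟨n - 1, by omega⟩)
      (c (Fin.cycSucc (⟨n - 1, by omega⟩ : Fin n))) := by
    rw [hF]
    simp only
    rw [dif_pos (show n - 1 < n by omega)]
  have hlong' : (∑ t ∈ Finset.range n, F t) - F (n - 1) < F (n - 1) := by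
    rw [hFn1, ← hT]
    exact hlong
  have hsplit : ∑ t ∈ Finset.range n, F t =
      (∑ t ∈ Finset.range i.1, F t) + (∑ t ∈ Finset.Ico i.1 j.1, F t) +
        (∑ t ∈ Finset.Ico j.1 n, F t) := by
    rw [Finset.range_eq_Ico, ← Finset.sum_Ico_consecutive F (Nat.zero_le j.1) (le_of_lt hj),
        ← Finset.sum_Ico_consecutive F (Nat.zero_le i.1) (le_of_lt hij), ← Finset.range_eq_Ico]
  have mainA : ∀ f : Fin (j.1 - i.1 + 1) → V,
      (∀ k : Fin (j.1 - i.1 + 1), f k = c ⟨i.1 + k.1, by have := k.isLt; omega⟩) →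
      (∑ t ∈ Finset.Ico i.1 j.1, F t) < G.label (c i) (c j) →
      G.IsNonMetricCycle f := by
    intro f hf he
    have hlen : G.cycleLen f =
        (∑ t ∈ Finset.Ico i.1 j.1, F t) + G.label (c i) (c j) := by
      rw [ELGraph.cycleLen, Fin.sum_univ_castSucc]
      congr 1
      · rw [Finset.sum_Ico_eq_sum_range,
          ← Fin.sum_univ_eq_sum_range (fun k => F (i.1 + k)) (j.1 - i.1)]
        refine Finset.sum_congr rfl fun k _ => ?_
        have hk := k.isLt
        have h1 : i.1 + k.1 < n := by omega
        rw [hf, hf, hFval _ h1]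
        have hc : ((Fin.castSucc k).cycSucc).1 = k.1 + 1 := by
          show (k.1 + 1) % (j.1 - i.1 + 1) = k.1 + 1
          exact Nat.mod_eq_of_lt (by omega)
        refine congr_arg₂ G.label (congrArg c (Fin.ext rfl)) (congrArg c (Fin.ext ?_))
        show i.1 + ((Fin.castSucc k).cycSucc).1 = (i.1 + k.1 + 1) % n
        rw [hc, Nat.mod_eq_of_lt (by omega)]
        omega
      · rw [hf, hf, show G.label (c i) (c j) = G.label (c j) (c i) from G.label_symm _ _]
        have h1 : ((Fin.last (j.1 - i.1)).cycSucc).1 = 0 := by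
          show (j.1 - i.1 + 1) % (j.1 - i.1 + 1) = 0
          exact Nat.mod_self _
        refine congr_arg₂ G.label (congrArg c (Fin.ext ?_)) (congrArg c (Fin.ext ?_))
        · show i.1 + (Fin.last (j.1 - i.1)).1 = j.1
          show i.1 + (j.1 - i.1) = j.1
          omega
        · show i.1 + ((Fin.last (j.1 - i.1)).cycSucc).1 = i.1
          omega
    refine ⟨⟨by omega, ?_, ?_⟩, ?_⟩
    · intro k₁ k₂ hkk
      rw [hf k₁, hf k₂] at hkk
      have h2 : i.1 + k₁.1 = i.1 + k₂.1 := congrArg Fin.val (hinj hkk)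
      exact Fin.ext (by omega)
    · intro k
      rw [hf k, hf k.cycSucc]
      by_cases hk : k.1 + 1 < j.1 - i.1 + 1
      · have h1 : (k.cycSucc).1 = k.1 + 1 := Nat.mod_eq_of_lt hk
        have h2 := hadj ⟨i.1 + k.1, by omega⟩
        have h3 : c (Fin.cycSucc (⟨i.1 + k.1, by omega⟩ : Fin n)) =
            c ⟨i.1 + (k.cycSucc).1, by omega⟩ := by
          refine congrArg c (Fin.ext ?_)
          show (i.1 + k.1 + 1) % n = i.1 + (k.cycSucc).1
          rw [h1, Nat.mod_eq_of_lt (by omega)]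
          omega
        rw [h3] at h2
        exact h2
      · have hk1 : k.1 = j.1 - i.1 := by have := k.isLt; omega
        have h1 : (k.cycSucc).1 = 0 := by
          show (k.1 + 1) % (j.1 - i.1 + 1) = 0
          have h3 : k.1 + 1 = j.1 - i.1 + 1 := by omega
          rw [h3, Nat.mod_self]
        have h2 := G.adj_symm _ _ hchord
        have e1 : c j = c ⟨i.1 + k.1, by omega⟩ :=
          congrArg c (Fin.ext (by show j.1 = i.1 + k.1; omega))
        have e2 : c i = c ⟨i.1 + (k.cycSucc).1, by omega⟩ :=
          congrArg c (Fin.ext (by show i.1 = i.1 + (k.cycSucc).1; omega))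
        rw [e1, e2] at h2
        exact h2
    · have h1 : ((⟨j.1 - i.1, by omega⟩ : Fin (j.1 - i.1 + 1)).cycSucc).1 = 0 := by
        show (j.1 - i.1 + 1) % (j.1 - i.1 + 1) = 0
        exact Nat.mod_self _
      have hlab : G.label (f ⟨j.1 - i.1, by omega⟩)
          (f (⟨j.1 - i.1, by omega⟩ : Fin (j.1 - i.1 + 1)).cycSucc) = G.label (c i) (c j) := by
        simp only [hf]
        exact (congr_arg₂ G.label
            (congrArg c (Fin.ext (by show i.1 + (j.1 - i.1) = j.1; omega)))
            (congrArg c (Fin.ext (by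
              show i.1 + ((⟨j.1 - i.1, by omega⟩ : Fin (j.1 - i.1 + 1)).cycSucc).1 = i.1
              omega)))).trans (G.label_symm (c j) (c i))
      refine ⟨⟨j.1 - i.1, by omega⟩, ?_⟩
      unfold ELGraph.IsLongEdge
      rw [hlen, hlab]
      linarith
  have mainB : ∀ f : Fin (n - (j.1 - i.1) + 1) → V,
      (∀ k : Fin (n - (j.1 - i.1) + 1), f k = c ⟨(j.1 + k.1) % n, Nat.mod_lt _ hnpos⟩) →
      G.label (c i) (c j) ≤ (∑ t ∈ Finset.Ico i.1 j.1, F t) →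
      G.IsNonMetricCycle f := by
    intro f hf he
    have hlen : G.cycleLen f =
        ((∑ t ∈ Finset.Ico j.1 n, F t) + ∑ t ∈ Finset.range i.1, F t) +
          G.label (c i) (c j) := by
      rw [ELGraph.cycleLen, Fin.sum_univ_castSucc]
      congr 1
      · have step1 : ∀ k : Fin (n - (j.1 - i.1)),
            G.label (f k.castSucc) (f (k.castSucc).cycSucc) = F ((j.1 + k.1) % n) := by
          intro k
          have hk := k.isLt
          rw [hf, hf, hFval _ (Nat.mod_lt _ hnpos)]
          have hc : ((Fin.castSucc k).cycSucc).1 = k.1 + 1 := by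
            show (k.1 + 1) % (n - (j.1 - i.1) + 1) = k.1 + 1
            exact Nat.mod_eq_of_lt (by omega)
          refine congr_arg₂ G.label (congrArg c (Fin.ext rfl)) (congrArg c (Fin.ext ?_))
          show (j.1 + ((Fin.castSucc k).cycSucc).1) % n = ((j.1 + k.1) % n + 1) % n
          rw [hc, Nat.mod_add_mod]
          congr 1 <;> omega
        rw [Finset.sum_congr rfl fun k _ => step1 k,
          Fin.sum_univ_eq_sum_range (fun k => F ((j.1 + k) % n)) (n - (j.1 - i.1)),
          show n - (j.1 - i.1) = (n - j.1) + i.1 by omega, Finset.sum_range_add]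
        congr 1
        · rw [Finset.sum_Ico_eq_sum_range]
          refine Finset.sum_congr rfl fun k hk => ?_
          have hk' := Finset.mem_range.mp hk
          rw [Nat.mod_eq_of_lt (by omega)]
        · refine Finset.sum_congr rfl fun k hk => ?_
          have hk' := Finset.mem_range.mp hk
          have h2 : j.1 + (n - j.1 + k) = n + k := by omega
          rw [h2, Nat.add_mod_left, Nat.mod_eq_of_lt (by omega)]
      · rw [hf, hf]
        refine congr_arg₂ G.label (congrArg c (Fin.ext ?_)) (congrArg c (Fin.ext ?_))
        · show (j.1 + (n - (j.1 - i.1))) % n = i.1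
          have h2 : j.1 + (n - (j.1 - i.1)) = n + i.1 := by omega
          rw [h2, Nat.add_mod_left]
          exact Nat.mod_eq_of_lt hi
        · show (j.1 + ((Fin.last (n - (j.1 - i.1))).cycSucc).1) % n = j.1
          show (j.1 + (n - (j.1 - i.1) + 1) % (n - (j.1 - i.1) + 1)) % n = j.1
          rw [Nat.mod_self, Nat.add_zero]
          exact Nat.mod_eq_of_lt hj
    refine ⟨⟨by omega, ?_, ?_⟩, ?_⟩
    · intro k₁ k₂ hkk
      rw [hf k₁, hf k₂] at hkk
      have hb1 := k₁.isLt
      have hb2 := k₂.isLt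
      have h2 : (j.1 + k₁.1) % n = (j.1 + k₂.1) % n := congrArg Fin.val (hinj hkk)
      rw [my_mod_helper (by omega), my_mod_helper (by omega)] at h2
      refine Fin.ext ?_
      split_ifs at h2 <;> omega
    · intro k
      rw [hf k, hf k.cycSucc]
      by_cases hk : k.1 + 1 < n - (j.1 - i.1) + 1
      · have h1 : (k.cycSucc).1 = k.1 + 1 := Nat.mod_eq_of_lt hk
        have h2 := hadj ⟨(j.1 + k.1) % n, Nat.mod_lt _ hnpos⟩
        have h3 : c (Fin.cycSucc (⟨(j.1 + k.1) % n, Nat.mod_lt _ hnpos⟩ : Fin n)) =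
            c ⟨(j.1 + (k.cycSucc).1) % n, Nat.mod_lt _ hnpos⟩ := by
          refine congrArg c (Fin.ext ?_)
          show ((j.1 + k.1) % n + 1) % n = (j.1 + (k.cycSucc).1) % n
          rw [h1, Nat.mod_add_mod]
          congr 1 <;> omega
        rw [h3] at h2
        exact h2
      · have hk1 : k.1 = n - (j.1 - i.1) := by have := k.isLt; omega
        have h1 : (k.cycSucc).1 = 0 := by
          show (k.1 + 1) % (n - (j.1 - i.1) + 1) = 0
          have h3 : k.1 + 1 = n - (j.1 - i.1) + 1 := by omega
          rw [h3, Nat.mod_self]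
        have h2 := hchord
        have e1 : c i = c ⟨(j.1 + k.1) % n, Nat.mod_lt _ hnpos⟩ :=
          congrArg c (Fin.ext (by
            show i.1 = (j.1 + k.1) % n
            have h4 : j.1 + k.1 = n + i.1 := by omega
            rw [h4, Nat.add_mod_left, Nat.mod_eq_of_lt hi]))
        have e2 : c j = c ⟨(j.1 + (k.cycSucc).1) % n, Nat.mod_lt _ hnpos⟩ :=
          congrArg c (Fin.ext (by
            show j.1 = (j.1 + (k.cycSucc).1) % n
            rw [h1, Nat.add_zero, Nat.mod_eq_of_lt hj]))
        rw [e1, e2] at h2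
        exact h2
    · have hlab : G.label (f ⟨n - 1 - j.1, by omega⟩)
          (f (⟨n - 1 - j.1, by omega⟩ : Fin (n - (j.1 - i.1) + 1)).cycSucc) = F (n - 1) := by
        rw [hf, hf, hFval (n - 1) (by omega)]
        refine congr_arg₂ G.label (congrArg c (Fin.ext ?_)) (congrArg c (Fin.ext ?_))
        · show (j.1 + (n - 1 - j.1)) % n = n - 1
          have h2 : j.1 + (n - 1 - j.1) = n - 1 := by omega
          rw [h2]
          exact Nat.mod_eq_of_lt (by omega)
        · show (j.1 + (n - 1 - j.1 + 1) % (n - (j.1 - i.1) + 1)) % n = (n - 1 + 1) % n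
          have h3 : n - 1 - j.1 + 1 = n - j.1 := by omega
          have h4 : n - 1 + 1 = n := by omega
          rw [h3, Nat.mod_eq_of_lt (show n - j.1 < n - (j.1 - i.1) + 1 by omega), h4,
            Nat.mod_self, show j.1 + (n - j.1) = n by omega, Nat.mod_self]
      refine ⟨⟨n - 1 - j.1, by omega⟩, ?_⟩
      unfold ELGraph.IsLongEdge
      rw [hlen, hlab]
      rw [hsplit] at hlong'
      linarith
  rcases le_or_gt (G.label (c i) (c j)) (∑ t ∈ Finset.Ico i.1 j.1, F t) with he | he
  · exact Or.inr (mainB _ (fun _ => rfl) he)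
  · exact Or.inl (mainA _ (fun _ => rfl) he)
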